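/- arXiv:2405.20601 — 2 statements merged into one kernel-verified Lean document; each statement's English description precedes it below -/
import Mathlib

section
/- For Gaussian densities N(0, φH^{-1}) and N(0, λ^{-1}H^{-1}) in ℝ^P with H positive definite, a ≤ φ ≤ b, λ^{-1} ∈ [a, b], and |λ - φ^{-1}| ≤ δ with φ^{-1} ≥ λ, the total variation distance satisfies ∫ |N^{λ^{-1}} - N^φ| ≤ C δ for a constant C depending only on P, a, b. -/
open Real MeasureTheory Matrix

lemma gaussA (P : ℕ) {c : ℝ} (hc : 0 < c) :
    Integrable (fun v : Fin P → ℝ => exp (-c * ∑ i, v i ^ 2)) ∧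
    ∫ v : Fin P → ℝ, exp (-c * ∑ i, v i ^ 2) = (π / c) ^ ((P : ℝ) / 2) := by
  have h1 : ∀ v : Fin P → ℝ, exp (-c * ∑ i, v i ^ 2) = ∏ i, exp (-c * v i ^ 2) := by
    intro v
    rw [← Real.exp_sum, Finset.mul_sum]
  constructor
  · simp only [h1]
    exact Integrable.fintype_prod (f := fun (_ : Fin P) (x : ℝ) => exp (-c * x ^ 2))
      (fun i => integrable_exp_neg_mul_sq hc)
  · simp only [h1]
    rw [integral_fintype_prod_volume_eq_prod (f := fun (_ : Fin P) (x : ℝ) => exp (-c * x ^ 2))]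
    simp only [integral_gaussian, Finset.prod_const, Finset.card_univ, Fintype.card_fin]
    rw [Real.sqrt_eq_rpow]
    rw [← Real.rpow_natCast ((π / c) ^ ((1:ℝ)/2)) P, ← Real.rpow_mul (by positivity)]
    ring_nf

open scoped MatrixOrder in
lemma gaussB (P : ℕ) {H : Matrix (Fin P) (Fin P) ℝ} (hH : H.PosDef) {c : ℝ} (hc : 0 < c) :
    Integrable (fun h : Fin P → ℝ => exp (-c * (h ⬝ᵥ H *ᵥ h))) ∧
    ∫ h : Fin P → ℝ, exp (-c * (h ⬝ᵥ H *ᵥ h)) = (π / c) ^ ((P : ℝ) / 2) / Real.sqrt H.det := by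
  classical
  set S := CFC.sqrt H with hSdef
  have hS2 : S * S = H := CFC.sqrt_mul_sqrt_self H hH.posSemidef.nonneg
  have hSherm : S.IsHermitian := (CFC.sqrt_nonneg H).posSemidef.1
  have hST : Sᵀ = S := by
    have := hSherm
    rwa [Matrix.IsHermitian, conjTranspose_eq_transpose_of_trivial] at this
  have hq : ∀ h : Fin P → ℝ, h ⬝ᵥ H *ᵥ h = ∑ i, (S *ᵥ h) i ^ 2 := by
    intro h
    rw [← hS2, ← Matrix.mulVec_mulVec, dotProduct_mulVec, ← hST,
      Matrix.vecMul_transpose, dotProduct]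
    simp [sq, hST]
  have hdetH : 0 < H.det := hH.det_pos
  have hdetS : S.det * S.det = H.det := by rw [← Matrix.det_mul, hS2]
  have hdetS0 : S.det ≠ 0 := by
    intro h0; rw [h0, mul_zero] at hdetS; exact hdetH.ne' hdetS.symm
  have habs : |S.det| = Real.sqrt H.det := by
    rw [← hdetS, ← sq, Real.sqrt_sq_eq_abs]
  set f : (Fin P → ℝ) →ₗ[ℝ] (Fin P → ℝ) := Matrix.toLin' S with hfdef
  have hdetf : LinearMap.det f = S.det := by rw [hfdef, LinearMap.det_toLin']
  have hdetf0 : LinearMap.det f ≠ 0 := by rw [hdetf]; exact hdetS0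
  have hmap : Measure.map f volume
      = ENNReal.ofReal |(LinearMap.det f)⁻¹| • (volume : Measure (Fin P → ℝ)) :=
    Real.map_linearMap_volume_pi_eq_smul_volume_pi hdetf0
  set g : (Fin P → ℝ) → ℝ := fun v => exp (-c * ∑ i, v i ^ 2) with hgdef
  have hfmeas : AEMeasurable f volume :=
    f.continuous_of_finiteDimensional.measurable.aemeasurable
  have hcomp : ∀ h : Fin P → ℝ, exp (-c * (h ⬝ᵥ H *ᵥ h)) = g (f h) := by
    intro h
    rw [hq h, hgdef]
    simp only [hfdef, Matrix.toLin'_apply]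
  have hgint : Integrable g := (gaussA P hc).1
  have hgmap : Integrable g (Measure.map f volume) := by
    rw [hmap]
    exact hgint.smul_measure ENNReal.ofReal_ne_top
  constructor
  · simp only [hcomp]
    exact (integrable_map_measure hgmap.1 hfmeas).mp hgmap
  · simp only [hcomp]
    have h1 : ∫ h : Fin P → ℝ, g (f h) = ∫ v, g v ∂(Measure.map f volume) :=
      (integral_map hfmeas hgmap.1).symm
    rw [h1, hmap, integral_smul_measure, ENNReal.toReal_ofReal (abs_nonneg _),
      (gaussA P hc).2, hdetf, abs_inv, habs, smul_eq_mul, inv_mul_eq_div]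

lemma aux_one_sub_exp_le {u : ℝ} : 1 - exp (-u) ≤ u := by
  have := Real.add_one_le_exp (-u)
  linarith

lemma aux_mul_exp_le {u : ℝ} (hu : 0 ≤ u) : u * exp (-u) ≤ 1 := by
  have h1 : u + 1 ≤ exp u := Real.add_one_le_exp u
  have h2 : exp (-u) = (exp u)⁻¹ := Real.exp_neg u
  have h3 : 0 < exp u := Real.exp_pos u
  rw [h2]
  rw [mul_inv_le_iff₀ h3, one_mul]
  linarith

set_option maxHeartbeats 1000000 in
/-- Total variation bound for Gaussian densities `N(0, σ H⁻¹)` on `ℝ^P`: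
for `φ ∈ [a,b]`, `λ ∈ [b⁻¹, a⁻¹]` with `0 ≤ φ⁻¹ - λ ≤ δ`, the `L¹` distance
between the densities with variances `λ⁻¹ H⁻¹` and `φ H⁻¹` is at most `C δ`
for a constant `C` depending only on `P`, `a`, `b`. -/
theorem gaussian_tv_bound
    (P : ℕ) (hP : 1 ≤ P) (a b : ℝ) (ha : 0 < a) (hab : a < b) :
    ∃ C : ℝ, 0 < C ∧
      ∀ (H : Matrix (Fin P) (Fin P) ℝ), H.PosDef →
      ∀ φ lam δ : ℝ, φ ∈ Set.Icc a b → lam ∈ Set.Icc b⁻¹ a⁻¹ →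
        0 ≤ φ⁻¹ - lam → φ⁻¹ - lam ≤ δ →
        (∫ h : Fin P → ℝ,
          |Real.sqrt H.det / ((2 * π * lam⁻¹) ^ ((P : ℝ) / 2)) *
              exp (-(h ⬝ᵥ (H *ᵥ h)) / (2 * lam⁻¹)) -
            Real.sqrt H.det / ((2 * π * φ) ^ ((P : ℝ) / 2)) *
              exp (-(h ⬝ᵥ (H *ᵥ h)) / (2 * φ))|) ≤ C * δ := by
  have hb : 0 < b := ha.trans hab
  set C : ℝ := (P : ℝ) * (b / a) ^ P * b + 2 * b * (2 * b / a) ^ ((P : ℝ) / 2) with hCdef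
  have hPpos : (0 : ℝ) < (P : ℝ) := by exact_mod_cast hP
  have hC : 0 < C := by
    have h1 : (0:ℝ) < (P : ℝ) * (b / a) ^ P * b := by positivity
    have h2 : (0:ℝ) < 2 * b * (2 * b / a) ^ ((P : ℝ) / 2) := by positivity
    rw [hCdef]; linarith
  refine ⟨C, hC, ?_⟩
  intro H hH φ lam δ hφm hlamm hε hδ
  obtain ⟨hφa, hφb⟩ := hφm
  obtain ⟨hlamb, hlama⟩ := hlamm
  have hφ0 : 0 < φ := ha.trans_le hφa
  have hlam0 : 0 < lam := lt_of_lt_of_le (by positivity) hlamb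
  set σ₁ : ℝ := lam⁻¹ with hσ₁def
  have hσ₁0 : 0 < σ₁ := by positivity
  have hσ₁a : a ≤ σ₁ := by
    calc a = (a⁻¹)⁻¹ := (inv_inv a).symm
    _ ≤ σ₁ := inv_anti₀ hlam0 hlama
  have hσ₁b : σ₁ ≤ b := by
    calc σ₁ ≤ (b⁻¹)⁻¹ := inv_anti₀ (by positivity) hlamb
    _ = b := inv_inv b
  have hlameq : lam = σ₁⁻¹ := by rw [hσ₁def, inv_inv]
  have hφσ₁ : φ ≤ σ₁ := by
    have h1 : σ₁⁻¹ ≤ φ⁻¹ := by rw [← hlameq]; linarith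
    have h2 : φ * σ₁⁻¹ ≤ φ * φ⁻¹ := mul_le_mul_of_nonneg_left h1 hφ0.le
    rw [mul_inv_cancel₀ hφ0.ne'] at h2
    calc φ = φ * (σ₁⁻¹ * σ₁) := by rw [inv_mul_cancel₀ hσ₁0.ne', mul_one]
    _ = (φ * σ₁⁻¹) * σ₁ := by ring
    _ ≤ 1 * σ₁ := mul_le_mul_of_nonneg_right h2 hσ₁0.le
    _ = σ₁ := one_mul σ₁
  -- constants
  set d : ℝ := Real.sqrt H.det with hddef
  have hd0 : 0 < d := Real.sqrt_pos.mpr hH.det_pos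
  set c₁ : ℝ := (2 * σ₁)⁻¹ with hc₁def
  set c₂ : ℝ := (2 * φ)⁻¹ with hc₂def
  set c₃ : ℝ := (4 * b)⁻¹ with hc₃def
  have hc₁0 : 0 < c₁ := by positivity
  have hc₂0 : 0 < c₂ := by positivity
  have hc₃0 : 0 < c₃ := by positivity
  have hc₁₂ : c₁ ≤ c₂ := inv_anti₀ (by positivity) (by linarith)
  set k₁ : ℝ := d / (2 * π * σ₁) ^ ((P : ℝ) / 2) with hk₁def
  set k₂ : ℝ := d / (2 * π * φ) ^ ((P : ℝ) / 2) with hk₂def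
  have hE₁0 : 0 < (2 * π * σ₁) ^ ((P : ℝ) / 2) := by
    apply Real.rpow_pos_of_pos; positivity
  have hE₂0 : 0 < (2 * π * φ) ^ ((P : ℝ) / 2) := by
    apply Real.rpow_pos_of_pos; positivity
  have hk₁0 : 0 < k₁ := by rw [hk₁def]; positivity
  have hk₂0 : 0 < k₂ := by rw [hk₂def]; positivity
  have hk₁₂ : k₁ ≤ k₂ := by
    rw [hk₁def, hk₂def]
    apply div_le_div_of_nonneg_left hd0.le hE₂0
    apply Real.rpow_le_rpow (by positivity)
      (mul_le_mul_of_nonneg_left hφσ₁ (by positivity)) (by positivity)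
  have hq0 : ∀ h : Fin P → ℝ, 0 ≤ h ⬝ᵥ H *ᵥ h := by
    intro h
    simpa using hH.posSemidef.dotProduct_mulVec_nonneg h
  set ε : ℝ := φ⁻¹ - lam with hεdef
  -- rewrite the integrand
  have key₁ : ∀ t : ℝ, -t / (2 * σ₁) = -c₁ * t := by
    intro t; rw [hc₁def]; field_simp
  have key₂ : ∀ t : ℝ, -t / (2 * φ) = -c₂ * t := by
    intro t; rw [hc₂def]; field_simp
  have hrw : ∀ h : Fin P → ℝ,
      |k₁ * exp (-(h ⬝ᵥ H *ᵥ h) / (2 * σ₁)) - k₂ * exp (-(h ⬝ᵥ H *ᵥ h) / (2 * φ))|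
      = |k₁ * exp (-c₁ * (h ⬝ᵥ H *ᵥ h)) - k₂ * exp (-c₂ * (h ⬝ᵥ H *ᵥ h))| := by
    intro h; rw [key₁, key₂]
  rw [show (∫ h : Fin P → ℝ,
      |k₁ * exp (-(h ⬝ᵥ H *ᵥ h) / (2 * σ₁)) - k₂ * exp (-(h ⬝ᵥ H *ᵥ h) / (2 * φ))|)
      = ∫ h : Fin P → ℝ,
      |k₁ * exp (-c₁ * (h ⬝ᵥ H *ᵥ h)) - k₂ * exp (-c₂ * (h ⬝ᵥ H *ᵥ h))| from by
    congr 1; funext h; exact hrw h]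
  -- pointwise bound
  have hc₂c₁ : c₂ - c₁ = ε / 2 := by
    rw [hc₁def, hc₂def, hεdef, hlameq, hσ₁def]
    rw [mul_inv, mul_inv, inv_inv]
    ring
  have hc₁c₃ : 2 * c₃ ≤ c₁ := by
    rw [hc₁def, hc₃def]
    rw [show (2:ℝ) * (4 * b)⁻¹ = (2 * b)⁻¹ by field_simp; ring]
    apply inv_anti₀ (by positivity) (by linarith)
  have hpt : ∀ h : Fin P → ℝ,
      |k₁ * exp (-c₁ * (h ⬝ᵥ H *ᵥ h)) - k₂ * exp (-c₂ * (h ⬝ᵥ H *ᵥ h))|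
      ≤ (k₂ - k₁) * exp (-c₁ * (h ⬝ᵥ H *ᵥ h))
        + (2 * b * ε * k₂) * exp (-c₃ * (h ⬝ᵥ H *ᵥ h)) := by
    intro h
    set t : ℝ := h ⬝ᵥ H *ᵥ h with htdef
    have ht : 0 ≤ t := hq0 h
    set X : ℝ := exp (-c₁ * t) with hXdef
    set Y : ℝ := exp (-c₂ * t) with hYdef
    set Z : ℝ := exp (-c₃ * t) with hZdef
    have hX0 : 0 < X := Real.exp_pos _
    have hY0 : 0 < Y := Real.exp_pos _
    have hZ0 : 0 < Z := Real.exp_pos _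
    have hYX : Y ≤ X := by
      apply Real.exp_le_exp.mpr
      have := mul_le_mul_of_nonneg_right hc₁₂ ht
      linarith
    have step1 : |k₁ * X - k₂ * Y| ≤ (k₂ - k₁) * X + k₂ * (X - Y) := by
      have hA : 0 ≤ (k₂ - k₁) * X := mul_nonneg (by linarith) hX0.le
      have hB : 0 ≤ k₂ * (X - Y) := mul_nonneg hk₂0.le (by linarith)
      rw [abs_le]
      constructor
      · linarith [hA, hB]
      · linarith [hA, hB]
    have step2 : k₂ * (X - Y) ≤ (2 * b * ε * k₂) * Z := by
      have hXY : X - Y ≤ X * ((c₂ - c₁) * t) := by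
        have hYeq : Y = X * exp (-((c₂ - c₁) * t)) := by
          rw [hXdef, hYdef, ← Real.exp_add]
          congr 1; ring
        have h1 : 1 - exp (-((c₂ - c₁) * t)) ≤ (c₂ - c₁) * t := aux_one_sub_exp_le
        calc X - Y = X * (1 - exp (-((c₂ - c₁) * t))) := by rw [hYeq]; ring
        _ ≤ X * ((c₂ - c₁) * t) := by
            apply mul_le_mul_of_nonneg_left h1 hX0.le
      have htX : t * X ≤ 4 * b * Z := by
        have h1 : X ≤ exp (-c₃ * t) * exp (-c₃ * t) := by
          rw [hXdef, ← Real.exp_add]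
          apply Real.exp_le_exp.mpr
          have := mul_le_mul_of_nonneg_right hc₁c₃ ht
          linarith
        have h2 : (c₃ * t) * exp (-(c₃ * t)) ≤ 1 := aux_mul_exp_le (by positivity)
        have h3 : t * exp (-c₃ * t) ≤ 4 * b := by
          have h4 : t * exp (-c₃ * t) = (4 * b) * ((c₃ * t) * exp (-(c₃ * t))) := by
            rw [hc₃def]
            rw [show -((4 * b)⁻¹ * t) = -(4*b)⁻¹ * t by ring]
            field_simp
          rw [h4]
          have h5 := mul_le_mul_of_nonneg_left h2 (by positivity : (0:ℝ) ≤ 4 * b)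
          linarith
        calc t * X ≤ t * (exp (-c₃ * t) * exp (-c₃ * t)) := by
              apply mul_le_mul_of_nonneg_left h1 ht
        _ = (t * exp (-c₃ * t)) * Z := by rw [hZdef]; ring
        _ ≤ (4 * b) * Z := by
              apply mul_le_mul_of_nonneg_right h3 hZ0.le
      calc k₂ * (X - Y) ≤ k₂ * (X * ((c₂ - c₁) * t)) :=
            mul_le_mul_of_nonneg_left hXY hk₂0.le
      _ = k₂ * (ε / 2) * (t * X) := by rw [hc₂c₁]; ring
      _ ≤ k₂ * (ε / 2) * (4 * b * Z) := by
            apply mul_le_mul_of_nonneg_left htX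
            have hε2 : 0 ≤ ε := hε
            positivity
      _ = (2 * b * ε * k₂) * Z := by ring
    calc |k₁ * X - k₂ * Y| ≤ (k₂ - k₁) * X + k₂ * (X - Y) := step1
    _ ≤ (k₂ - k₁) * X + (2 * b * ε * k₂) * Z := by linarith
  -- integrate
  have hI₁ := gaussB P hH hc₁0
  have hI₂ := gaussB P hH hc₂0
  have hI₃ := gaussB P hH hc₃0
  have hintL : Integrable (fun h : Fin P → ℝ =>
      |k₁ * exp (-c₁ * (h ⬝ᵥ H *ᵥ h)) - k₂ * exp (-c₂ * (h ⬝ᵥ H *ᵥ h))|) :=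
    ((hI₁.1.const_mul k₁).sub (hI₂.1.const_mul k₂)).abs
  have hintR1 : Integrable (fun h : Fin P → ℝ =>
      (k₂ - k₁) * exp (-c₁ * (h ⬝ᵥ H *ᵥ h))) := hI₁.1.const_mul _
  have hintR2 : Integrable (fun h : Fin P → ℝ =>
      (2 * b * ε * k₂) * exp (-c₃ * (h ⬝ᵥ H *ᵥ h))) := hI₃.1.const_mul _
  have hmono : (∫ h : Fin P → ℝ,
      |k₁ * exp (-c₁ * (h ⬝ᵥ H *ᵥ h)) - k₂ * exp (-c₂ * (h ⬝ᵥ H *ᵥ h))|)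
      ≤ ∫ h : Fin P → ℝ, ((k₂ - k₁) * exp (-c₁ * (h ⬝ᵥ H *ᵥ h))
        + (2 * b * ε * k₂) * exp (-c₃ * (h ⬝ᵥ H *ᵥ h))) :=
    integral_mono hintL (hintR1.add hintR2) hpt
  have hintval : (∫ h : Fin P → ℝ, ((k₂ - k₁) * exp (-c₁ * (h ⬝ᵥ H *ᵥ h))
        + (2 * b * ε * k₂) * exp (-c₃ * (h ⬝ᵥ H *ᵥ h))))
      = (k₂ - k₁) * ((π / c₁) ^ ((P : ℝ) / 2) / d)
        + (2 * b * ε * k₂) * ((π / c₃) ^ ((P : ℝ) / 2) / d) := by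
    rw [integral_add hintR1 hintR2, integral_const_mul, integral_const_mul,
      hI₁.2, hI₃.2]
  -- arithmetic
  have hbase₁ : π / c₁ = 2 * π * σ₁ := by
    rw [hc₁def]; field_simp
  have hbase₃ : π / c₃ = 4 * π * b := by
    rw [hc₃def]; field_simp
  have hterm1 : (k₂ - k₁) * ((π / c₁) ^ ((P : ℝ) / 2) / d)
      = (σ₁ / φ) ^ ((P : ℝ) / 2) - 1 := by
    rw [hbase₁, hk₁def, hk₂def]
    have hratio : (2 * π * σ₁) ^ ((P : ℝ) / 2) / (2 * π * φ) ^ ((P : ℝ) / 2)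
        = (σ₁ / φ) ^ ((P : ℝ) / 2) := by
      rw [← Real.div_rpow (by positivity) (by positivity)]
      congr 1
      rw [mul_div_mul_left _ _ (by positivity : (2 * π : ℝ) ≠ 0)]
    field_simp
    rw [← hratio]
    field_simp
  have hterm2 : (2 * b * ε * k₂) * ((π / c₃) ^ ((P : ℝ) / 2) / d)
      = 2 * b * ε * (2 * b / φ) ^ ((P : ℝ) / 2) := by
    rw [hbase₃, hk₂def]
    have hratio : (4 * π * b) ^ ((P : ℝ) / 2) / (2 * π * φ) ^ ((P : ℝ) / 2)
        = (2 * b / φ) ^ ((P : ℝ) / 2) := by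
      rw [← Real.div_rpow (by positivity) (by positivity)]
      congr 1
      field_simp
      ring
    rw [← hratio]
    field_simp
  -- bound term1
  set x : ℝ := σ₁ / φ with hxdef
  have hx1 : 1 ≤ x := (one_le_div hφ0).mpr hφσ₁
  have hxba : x ≤ b / a := div_le_div₀ hb.le hσ₁b ha hφa
  have hba1 : 1 ≤ b / a := (one_le_div ha).mpr hab.le
  have hxε : x - 1 ≤ b * ε := by
    have h1 : σ₁ * ε = x - 1 := by
      rw [hεdef, hlameq, hxdef]
      field_simp
    rw [← h1]
    apply mul_le_mul_of_nonneg_right hσ₁b hε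
  have hbd1 : x ^ ((P : ℝ) / 2) - 1 ≤ (P : ℝ) * (b / a) ^ P * (b * ε) := by
    have h1 : x ^ ((P : ℝ) / 2) ≤ x ^ (P : ℕ) := by
      rw [← Real.rpow_natCast x P]
      apply Real.rpow_le_rpow_of_exponent_le hx1
      push_cast
      linarith
    have h2 : x ^ (P : ℕ) - 1 ≤ ((P : ℝ) * (b / a) ^ P) * (x - 1) := by
      rw [← geom_sum_mul]
      apply mul_le_mul_of_nonneg_right _ (by linarith)
      calc (∑ i ∈ Finset.range P, x ^ i) ≤ ∑ i ∈ Finset.range P, (b / a) ^ P := by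
            apply Finset.sum_le_sum
            intro i hi
            calc x ^ i ≤ (b / a) ^ i := pow_le_pow_left₀ (by linarith) hxba i
            _ ≤ (b / a) ^ P := pow_le_pow_right₀ hba1 (Finset.mem_range.mp hi).le
      _ = (P : ℝ) * (b / a) ^ P := by
            rw [Finset.sum_const, Finset.card_range, nsmul_eq_mul]
    have h3 : ((P : ℝ) * (b / a) ^ P) * (x - 1) ≤ ((P : ℝ) * (b / a) ^ P) * (b * ε) := by
      apply mul_le_mul_of_nonneg_left hxε (by positivity)
    calc x ^ ((P : ℝ) / 2) - 1 ≤ x ^ (P : ℕ) - 1 := by linarith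
    _ ≤ ((P : ℝ) * (b / a) ^ P) * (x - 1) := h2
    _ ≤ (P : ℝ) * (b / a) ^ P * (b * ε) := h3
  -- bound term2
  have hbd2 : 2 * b * ε * (2 * b / φ) ^ ((P : ℝ) / 2)
      ≤ 2 * b * (2 * b / a) ^ ((P : ℝ) / 2) * ε := by
    have h1 : (2 * b / φ) ^ ((P : ℝ) / 2) ≤ (2 * b / a) ^ ((P : ℝ) / 2) := by
      apply Real.rpow_le_rpow (by positivity) _ (by positivity)
      apply div_le_div₀ (by positivity) le_rfl ha hφa
    calc 2 * b * ε * (2 * b / φ) ^ ((P : ℝ) / 2)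
        ≤ 2 * b * ε * (2 * b / a) ^ ((P : ℝ) / 2) := by
          apply mul_le_mul_of_nonneg_left h1 (by positivity)
    _ = 2 * b * (2 * b / a) ^ ((P : ℝ) / 2) * ε := by ring
  calc (∫ h : Fin P → ℝ,
      |k₁ * exp (-c₁ * (h ⬝ᵥ H *ᵥ h)) - k₂ * exp (-c₂ * (h ⬝ᵥ H *ᵥ h))|)
      ≤ (k₂ - k₁) * ((π / c₁) ^ ((P : ℝ) / 2) / d)
        + (2 * b * ε * k₂) * ((π / c₃) ^ ((P : ℝ) / 2) / d) := by
        rw [← hintval]; exact hmono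
  _ = (x ^ ((P : ℝ) / 2) - 1) + 2 * b * ε * (2 * b / φ) ^ ((P : ℝ) / 2) := by
        rw [hterm1, hterm2]
  _ ≤ (P : ℝ) * (b / a) ^ P * (b * ε) + 2 * b * (2 * b / a) ^ ((P : ℝ) / 2) * ε := by
        linarith
  _ = C * ε := by rw [hCdef]; ring
  _ ≤ C * δ := mul_le_mul_of_nonneg_left (by linarith) hC.le
end

section
/- Let φ_n ~ InvGamma(n/2, n c_n / 2) truncated to [a,b], where c_n → φ₀ ∈ (a, b). Then φ_n converges in distribution to the point mass at φ₀. -/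
open Real MeasureTheory Filter

private lemma dens_form (n : ℕ) (cn x : ℝ) (hx : 0 < x) :
    x ^ (-(n:ℝ) / 2 - 1) * Real.exp (-((n:ℝ) * cn) / (2 * x))
      = x⁻¹ * Real.exp (-((n:ℝ)/2) * (Real.log x + cn / x)) := by
  have h1 : x⁻¹ = Real.exp (-(Real.log x)) := by
    rw [Real.exp_neg, Real.exp_log hx]
  rw [Real.rpow_def_of_pos hx, h1, ← Real.exp_add, ← Real.exp_add]
  congr 1
  field_simp
  ring

private lemma h0_strict {φ₀ x : ℝ} (hφ : 0 < φ₀) (hx : 0 < x) (hne : x ≠ φ₀) :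
    Real.log φ₀ + φ₀ / φ₀ < Real.log x + φ₀ / x := by
  set g : ℝ → ℝ := fun y => Real.log y + φ₀ * y⁻¹ with hg
  have hd : ∀ y : ℝ, 0 < y → HasDerivAt g ((y - φ₀) / y ^ 2) y := by
    intro y hy
    have h1 : HasDerivAt (fun y : ℝ => Real.log y) y⁻¹ y := Real.hasDerivAt_log hy.ne'
    have h2 : HasDerivAt (fun y : ℝ => φ₀ * y⁻¹) (φ₀ * (-(y ^ 2)⁻¹)) y :=
      (hasDerivAt_inv hy.ne').const_mul φ₀
    have h3 := h1.add h2
    have hy' : y ≠ 0 := hy.ne'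
    refine h3.congr_deriv ?_
    field_simp
    ring
  have hcont : ∀ s : Set ℝ, s ⊆ Set.Ioi (0:ℝ) → ContinuousOn g s := by
    intro s hs
    apply ContinuousOn.add
    · exact Real.continuousOn_log.mono (fun y hy => ne_of_gt (hs hy))
    · exact continuousOn_const.mul (continuousOn_inv₀.mono (fun y hy => ne_of_gt (hs hy)))
  have key : g φ₀ < g x := by
    rcases lt_or_gt_of_ne hne with h | h
    · have hsub : Set.Icc x φ₀ ⊆ Set.Ioi (0:ℝ) := fun y hy => lt_of_lt_of_le hx hy.1
      have hanti : StrictAntiOn g (Set.Icc x φ₀) := by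
        apply strictAntiOn_of_deriv_neg (convex_Icc _ _) (hcont _ hsub)
        intro y hy
        rw [interior_Icc] at hy
        have hy0 : 0 < y := lt_trans hx hy.1
        rw [(hd y hy0).deriv]
        exact div_neg_of_neg_of_pos (by linarith [hy.2]) (by positivity)
      exact hanti (Set.left_mem_Icc.mpr h.le) (Set.right_mem_Icc.mpr h.le) h
    · have hsub : Set.Icc φ₀ x ⊆ Set.Ioi (0:ℝ) := fun y hy => lt_of_lt_of_le hφ hy.1
      have hmono : StrictMonoOn g (Set.Icc φ₀ x) := by
        apply strictMonoOn_of_deriv_pos (convex_Icc _ _) (hcont _ hsub)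
        intro y hy
        rw [interior_Icc] at hy
        have hy0 : 0 < y := lt_trans hφ hy.1
        rw [(hd y hy0).deriv]
        exact div_pos (by linarith [hy.1]) (by positivity)
      exact hmono (Set.left_mem_Icc.mpr h.le) (Set.right_mem_Icc.mpr h.le) h
  simpa [hg, div_eq_mul_inv] using key

private lemma small_calc {M ε : ℝ} (hM0 : 0 ≤ M) (hε : 0 < ε) :
    (2 * M) * (ε / (4 * (M + 1))) < ε / 2 := by
  have hM1 : (0:ℝ) < M + 1 := by linarith
  have heq : (2 * M) * (ε / (4 * (M + 1))) = (M / (M + 1)) * (ε / 2) := by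
    field_simp
    ring
  rw [heq]
  have hlt : M / (M + 1) < 1 := (div_lt_one hM1).mpr (by linarith)
  calc (M / (M + 1)) * (ε / 2) < 1 * (ε / 2) := by
        apply mul_lt_mul_of_pos_right hlt (by linarith)
    _ = ε / 2 := one_mul _

set_option maxHeartbeats 1000000 in
/-- If `φ_n` has the inverse gamma distribution with shape `n/2` and scale
`n c_n/2` truncated to `[a,b]` (density proportional to
`x^{-n/2-1} e^{-n c_n/(2x)}` on `[a,b]`), and `c_n → φ₀ ∈ (a,b)`, then `φ_n`
converges in distribution to the point mass at `φ₀`. -/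
theorem truncated_invGamma_concentrates
    (a b φ₀ : ℝ) (ha : 0 < a) (hab : a < b) (hφ₀ : φ₀ ∈ Set.Ioo a b)
    (c : ℕ → ℝ) (hc : Tendsto c atTop (nhds φ₀))
    (dens : ℕ → ℝ → ℝ)
    (hdens : ∀ n x, dens n x
      = x ^ (-(n : ℝ) / 2 - 1) * exp (-((n : ℝ) * c n) / (2 * x)))
    (Z : ℕ → ℝ) (hZ : ∀ n, Z n = ∫ x in Set.Icc a b, dens n x) :
    ∀ f : ℝ → ℝ, Continuous f → (∃ M, ∀ x, |f x| ≤ M) →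
      Tendsto (fun n => ∫ x in Set.Icc a b, f x * (dens n x / Z n)) atTop
        (nhds (f φ₀)) := by
  obtain ⟨haφ, hφb⟩ := hφ₀
  have hφpos : 0 < φ₀ := lt_trans ha haφ
  intro f hf hMex
  obtain ⟨M, hM⟩ := hMex
  have hM0 : 0 ≤ M := le_trans (abs_nonneg _) (hM 0)
  set K := Set.Icc a b with hK
  have hKmeas : MeasurableSet K := measurableSet_Icc
  -- basic facts about dens
  have hdpos : ∀ n, ∀ x ∈ K, 0 < dens n x := by
    intro n x hx
    have hx0 : 0 < x := lt_of_lt_of_le ha hx.1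
    rw [hdens]
    positivity
  have hdcont : ∀ n, ContinuousOn (dens n) K := by
    intro n
    have hfun : dens n = fun x => x ^ (-(n:ℝ) / 2 - 1) * Real.exp (-((n:ℝ) * c n) / (2 * x)) :=
      funext (hdens n)
    rw [hfun]
    apply ContinuousOn.mul
    · exact continuousOn_id.rpow_const (fun x hx => Or.inl (ne_of_gt (lt_of_lt_of_le ha hx.1)))
    · apply Real.continuous_exp.comp_continuousOn
      exact continuousOn_const.div (by fun_prop) (fun x hx => by
        have hx0 : 0 < x := lt_of_lt_of_le ha hx.1; positivity)
  have hdint : ∀ n, IntegrableOn (dens n) K := fun n =>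
    (hdcont n).integrableOn_compact isCompact_Icc
  set h₀ : ℝ → ℝ := fun x => Real.log x + φ₀ / x with hh₀
  have hh₀key : ∀ x, 0 < x → x ≠ φ₀ → h₀ φ₀ < h₀ x := by
    intro x hx hne
    simp only [hh₀]
    exact h0_strict hφpos hx hne
  have hh₀cont : ContinuousOn h₀ K := by
    apply ContinuousOn.add
    · exact Real.continuousOn_log.mono (fun y hy => ne_of_gt (lt_of_lt_of_le ha hy.1))
    · exact continuousOn_const.div continuousOn_id
        (fun y hy => ne_of_gt (lt_of_lt_of_le ha hy.1))
  have hh₀sub : ∀ x, 0 < x → ∀ cn, Real.log x + cn / x - h₀ x = (cn - φ₀) / x := by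
    intro x hx cn
    simp only [hh₀]
    field_simp
    ring
  clear_value h₀
  rw [Metric.tendsto_atTop]
  intro ε hε
  -- continuity of f at φ₀
  obtain ⟨δ₁, hδ₁, hfδ⟩ : ∃ δ > 0, ∀ x, |x - φ₀| < δ → |f x - f φ₀| < ε / 2 := by
    obtain ⟨δ, hδ, H⟩ := Metric.continuous_iff.mp hf φ₀ (ε / 2) (by linarith)
    exact ⟨δ, hδ, fun x hx => by
      simpa [Real.dist_eq] using H x (by simpa [Real.dist_eq] using hx)⟩
  set δ := min δ₁ (min (φ₀ - a) (b - φ₀) / 2) with hδdef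
  have hδpos : 0 < δ := lt_min hδ₁ (by
    apply div_pos _ two_pos
    exact lt_min (by linarith) (by linarith))
  have hδle : δ ≤ δ₁ := min_le_left _ _
  have hδa : a < φ₀ - δ := by
    have h1 : δ ≤ (φ₀ - a) / 2 := le_trans (min_le_right _ _)
      (by gcongr <;> norm_num)
    linarith
  have hδb : φ₀ + δ < b := by
    have h1 : δ ≤ (b - φ₀) / 2 := le_trans (min_le_right _ _)
      (by gcongr <;> norm_num)
    linarith
  set B := Set.Ioo (φ₀ - δ) (φ₀ + δ) with hB
  set S := K \ B with hS
  have hSK : S ⊆ K := Set.diff_subset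
  have hBmeas : MeasurableSet B := measurableSet_Ioo
  have hSmeas : MeasurableSet S := hKmeas.diff hBmeas
  have hScomp : IsCompact S := isCompact_Icc.diff isOpen_Ioo
  have hSne : S.Nonempty :=
    ⟨a, ⟨le_refl a, hab.le⟩, fun hmem => absurd hmem.1 (not_lt.mpr (by linarith))⟩
  obtain ⟨s₀, hs₀S, hs₀min⟩ := hScomp.exists_isMinOn hSne (hh₀cont.mono hSK)
  have hs₀ne : s₀ ≠ φ₀ := by
    intro h
    exact (hs₀S.2) (h ▸ ⟨by linarith, by linarith⟩)
  have hs₀pos : 0 < s₀ := lt_of_lt_of_le ha (hSK hs₀S).1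
  have hm : h₀ φ₀ < h₀ s₀ := hh₀key s₀ hs₀pos hs₀ne
  set η : ℝ := (h₀ s₀ - h₀ φ₀) / 4 with hηdef
  have hη : 0 < η := by have h4 := hm; simp only [hηdef]; linarith
  -- pick small interval I around φ₀
  obtain ⟨r, hr, hrδ, hrI⟩ : ∃ r > 0, r ≤ δ ∧ ∀ x, |x - φ₀| ≤ r → h₀ x ≤ h₀ φ₀ + η := by
    have hcontφ : ContinuousAt h₀ φ₀ :=
      hh₀cont.continuousAt (Icc_mem_nhds haφ hφb)
    obtain ⟨r₁, hr₁, H⟩ := Metric.continuousAt_iff.mp hcontφ η hη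
    refine ⟨min (r₁ / 2) δ, lt_min (by linarith) hδpos, min_le_right _ _, fun x hx => ?_⟩
    have h2 : |x - φ₀| < r₁ := lt_of_le_of_lt hx (lt_of_le_of_lt (min_le_left _ _) (by linarith))
    have := H (show dist x φ₀ < r₁ by simpa [Real.dist_eq] using h2)
    rw [Real.dist_eq] at this
    have := abs_le.mp this.le
    linarith [this.1]
  set I := Set.Icc (φ₀ - r) (φ₀ + r) with hI
  have hIK : I ⊆ K := fun x hx => ⟨by linarith [hx.1, hrδ], by linarith [hx.2, hrδ]⟩
  -- C : ratio constant
  set C : ℝ := ((b - a) * a⁻¹) / ((2 * r) * b⁻¹) with hCdef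
  have hb0 : 0 < b := lt_trans ha hab
  have hCpos : 0 < C := by
    apply div_pos
    · apply mul_pos (by linarith) (by positivity)
    · positivity
  -- the key quantitative bound
  have hbound : ∀ n : ℕ, |c n - φ₀| < η * a →
      0 < Z n ∧ (∫ x in S, dens n x) / Z n ≤ C * Real.exp (-((n:ℝ)/2) * η) := by
    intro n hn
    have hcomp : ∀ x ∈ K, |Real.log x + c n / x - h₀ x| ≤ η := by
      intro x hx
      have hx0 : 0 < x := lt_of_lt_of_le ha hx.1
      have heq : Real.log x + c n / x - h₀ x = (c n - φ₀) / x := hh₀sub x hx0 (c n)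
      rw [heq, abs_div, abs_of_pos hx0]
      calc |c n - φ₀| / x ≤ (η * a) / x := by gcongr <;> try exact hn.le
        _ ≤ (η * a) / a := div_le_div_of_nonneg_left (by positivity) ha hx.1
        _ = η := by field_simp
    have hdform : ∀ x ∈ K,
        dens n x = x⁻¹ * Real.exp (-((n:ℝ)/2) * (Real.log x + c n / x)) := fun x hx => by
      rw [hdens]; exact dens_form n (c n) x (lt_of_lt_of_le ha hx.1)
    have hn2 : (0:ℝ) ≤ (n:ℝ)/2 := by positivity
    -- upper bound on S
    have hub : ∀ x ∈ S, dens n x ≤ a⁻¹ * Real.exp (-((n:ℝ)/2) * (h₀ s₀ - η)) := by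
      intro x hxS
      have hxK := hSK hxS
      have hx0 : 0 < x := lt_of_lt_of_le ha hxK.1
      rw [hdform x hxK]
      have h1 : x⁻¹ ≤ a⁻¹ := by gcongr; exact hxK.1
      have hmin : h₀ s₀ ≤ h₀ x := hs₀min hxS
      have h2 : h₀ s₀ - η ≤ Real.log x + c n / x := by
        have := abs_le.mp (hcomp x hxK)
        linarith [this.1]
      have h3 : Real.exp (-((n:ℝ)/2) * (Real.log x + c n / x))
          ≤ Real.exp (-((n:ℝ)/2) * (h₀ s₀ - η)) := by
        apply Real.exp_le_exp.mpr
        nlinarith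
      exact mul_le_mul h1 h3 (Real.exp_pos _).le (by positivity)
    -- lower bound on I
    have hlb : ∀ x ∈ I, b⁻¹ * Real.exp (-((n:ℝ)/2) * (h₀ φ₀ + 2 * η)) ≤ dens n x := by
      intro x hxI
      have hxK := hIK hxI
      have hx0 : 0 < x := lt_of_lt_of_le ha hxK.1
      rw [hdform x hxK]
      have h1 : b⁻¹ ≤ x⁻¹ := inv_anti₀ hx0 hxK.2
      have h2 : Real.log x + c n / x ≤ h₀ φ₀ + 2 * η := by
        have ha1 := abs_le.mp (hcomp x hxK)
        have ha2 : h₀ x ≤ h₀ φ₀ + η := hrI x (abs_le.mpr ⟨by linarith [hxI.1], by linarith [hxI.2]⟩)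
        linarith [ha1.2]
      have h3 : Real.exp (-((n:ℝ)/2) * (h₀ φ₀ + 2 * η))
          ≤ Real.exp (-((n:ℝ)/2) * (Real.log x + c n / x)) := by
        apply Real.exp_le_exp.mpr
        nlinarith
      exact mul_le_mul h1 h3 (Real.exp_pos _).le (by positivity)
    -- integral bounds
    have hvolK : volume K ≠ ⊤ := by
      rw [hK, Real.volume_Icc]; exact ENNReal.ofReal_ne_top
    have hvolS : (volume S).toReal ≤ b - a := by
      have h1 : (volume S).toReal ≤ (volume K).toReal :=
        ENNReal.toReal_mono hvolK (measure_mono hSK)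
      rwa [hK, Real.volume_Icc, ENNReal.toReal_ofReal (by linarith)] at h1
    have hintS : ∫ x in S, dens n x
        ≤ (b - a) * (a⁻¹ * Real.exp (-((n:ℝ)/2) * (h₀ s₀ - η))) := by
      have hconst : IntegrableOn (fun _ : ℝ => a⁻¹ * Real.exp (-((n:ℝ)/2) * (h₀ s₀ - η))) S := by
        apply (integrableOn_const_iff).mpr
        exact Or.inr ((measure_mono hSK).trans_lt (Ne.lt_top hvolK))
      calc ∫ x in S, dens n x
          ≤ ∫ _x in S, a⁻¹ * Real.exp (-((n:ℝ)/2) * (h₀ s₀ - η)) :=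
            setIntegral_mono_on ((hdint n).mono_set hSK) hconst hSmeas hub
        _ = (volume S).toReal * (a⁻¹ * Real.exp (-((n:ℝ)/2) * (h₀ s₀ - η))) := by
            rw [setIntegral_const, smul_eq_mul, measureReal_def]
        _ ≤ (b - a) * (a⁻¹ * Real.exp (-((n:ℝ)/2) * (h₀ s₀ - η))) :=
            mul_le_mul_of_nonneg_right hvolS (by positivity)
    have hvolI : (volume I).toReal = 2 * r := by
      rw [hI, Real.volume_Icc, ENNReal.toReal_ofReal (by linarith)]
      ring
    have hintI : (2 * r) * (b⁻¹ * Real.exp (-((n:ℝ)/2) * (h₀ φ₀ + 2 * η)))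
        ≤ ∫ x in I, dens n x := by
      have hconst : IntegrableOn (fun _ : ℝ => b⁻¹ * Real.exp (-((n:ℝ)/2) * (h₀ φ₀ + 2 * η))) I := by
        apply (integrableOn_const_iff).mpr
        refine Or.inr ?_
        rw [hI, Real.volume_Icc]; exact ENNReal.ofReal_lt_top
      calc (2 * r) * (b⁻¹ * Real.exp (-((n:ℝ)/2) * (h₀ φ₀ + 2 * η)))
          = (volume I).toReal * (b⁻¹ * Real.exp (-((n:ℝ)/2) * (h₀ φ₀ + 2 * η))) := by
            rw [hvolI]
        _ = ∫ _x in I, b⁻¹ * Real.exp (-((n:ℝ)/2) * (h₀ φ₀ + 2 * η)) := by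
            rw [setIntegral_const, smul_eq_mul, measureReal_def]
        _ ≤ ∫ x in I, dens n x :=
            setIntegral_mono_on hconst ((hdint n).mono_set hIK) measurableSet_Icc hlb
    have hZI : ∫ x in I, dens n x ≤ Z n := by
      rw [hZ]
      apply setIntegral_mono_set (hdint n)
      · exact (ae_restrict_iff' hKmeas).mpr (ae_of_all _ fun x hx => (hdpos n x hx).le)
      · exact HasSubset.Subset.eventuallyLE hIK
    have hIpos : 0 < (2 * r) * (b⁻¹ * Real.exp (-((n:ℝ)/2) * (h₀ φ₀ + 2 * η))) := by positivity
    have hZpos : 0 < Z n := lt_of_lt_of_le hIpos (le_trans hintI hZI)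
    refine ⟨hZpos, ?_⟩
    have hratio : (∫ x in S, dens n x) / Z n
        ≤ ((b - a) * (a⁻¹ * Real.exp (-((n:ℝ)/2) * (h₀ s₀ - η))))
          / ((2 * r) * (b⁻¹ * Real.exp (-((n:ℝ)/2) * (h₀ φ₀ + 2 * η)))) :=
      div_le_div₀ (mul_nonneg (by linarith) (by positivity)) hintS hIpos (le_trans hintI hZI)
    refine le_trans hratio (le_of_eq ?_)
    have hm4 : h₀ s₀ = h₀ φ₀ + 4 * η := by rw [hηdef]; ring
    have hexp : Real.exp (-((n:ℝ)/2) * (h₀ s₀ - η))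
        = Real.exp (-((n:ℝ)/2) * η) * Real.exp (-((n:ℝ)/2) * (h₀ φ₀ + 2 * η)) := by
      rw [← Real.exp_add]
      congr 1
      rw [hm4]; ring
    rw [hCdef, hexp]
    have he2 : Real.exp (-((n:ℝ)/2) * (h₀ φ₀ + 2 * η)) ≠ 0 := (Real.exp_pos _).ne'
    field_simp
  -- eventual bounds
  have hev1 : ∀ᶠ n in atTop, |c n - φ₀| < η * a := by
    obtain ⟨N, hN⟩ := Metric.tendsto_atTop.mp hc (η * a) (by positivity)
    exact eventually_atTop.mpr ⟨N, fun n hn => by simpa [Real.dist_eq] using hN n hn⟩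
  have hev2 : ∀ᶠ n : ℕ in atTop, C * Real.exp (-((n:ℝ)/2) * η) < ε / (4 * (M + 1)) := by
    have htend : Tendsto (fun n : ℕ => C * Real.exp (-((n:ℝ)/2) * η)) atTop (nhds 0) := by
      rw [show (0:ℝ) = C * 0 by ring]
      apply Tendsto.const_mul
      apply Real.tendsto_exp_atBot.comp
      have h1 : Tendsto (fun n : ℕ => (n:ℝ) * (η / 2)) atTop atTop :=
        Tendsto.atTop_mul_const (by positivity) tendsto_natCast_atTop_atTop
      have h2 : Tendsto (fun n : ℕ => -((n:ℝ) * (η / 2))) atTop atBot :=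
        tendsto_neg_atTop_atBot.comp h1
      refine h2.congr (fun n => ?_)
      ring
    exact htend.eventually_lt_const (by positivity)
  obtain ⟨N, hN⟩ := eventually_atTop.mp (hev1.and hev2)
  refine ⟨N, fun n hn => ?_⟩
  obtain ⟨hn1, hn2⟩ := hN n hn
  obtain ⟨hZpos, hratio⟩ := hbound n hn1
  -- integrability facts for this n
  have hρcont : ContinuousOn (fun x => dens n x / Z n) K := (hdcont n).div_const _
  have hρint : IntegrableOn (fun x => dens n x / Z n) K :=
    hρcont.integrableOn_compact isCompact_Icc
  have hρnonneg : ∀ x ∈ K, 0 ≤ dens n x / Z n := fun x hx =>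
    div_nonneg (hdpos n x hx).le hZpos.le
  have hρtotal : ∫ x in K, dens n x / Z n = 1 := by
    rw [integral_div, ← hZ]
    exact div_self hZpos.ne'
  have hfρint : IntegrableOn (fun x => f x * (dens n x / Z n)) K :=
    (hf.continuousOn.mul hρcont).integrableOn_compact isCompact_Icc
  have habsint : IntegrableOn (fun x => |f x - f φ₀| * (dens n x / Z n)) K :=
    (((hf.sub continuous_const).abs.continuousOn).mul hρcont).integrableOn_compact isCompact_Icc
  rw [Real.dist_eq]
  have hkey : (∫ x in K, f x * (dens n x / Z n)) - f φ₀
      = ∫ x in K, (f x - f φ₀) * (dens n x / Z n) := by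
    have h1 : ∫ x in K, (f x - f φ₀) * (dens n x / Z n)
        = (∫ x in K, f x * (dens n x / Z n))
          - ∫ x in K, f φ₀ * (dens n x / Z n) := by
      rw [show (fun x => (f x - f φ₀) * (dens n x / Z n))
          = fun x => f x * (dens n x / Z n) - f φ₀ * (dens n x / Z n) from
          funext fun x => by ring]
      exact integral_sub hfρint (hρint.const_mul (f φ₀))
    have h2 : ∫ x in K, f φ₀ * (dens n x / Z n) = f φ₀ := by
      rw [integral_const_mul, hρtotal, mul_one]
    rw [h1, h2]
  rw [hkey]
  have hstep1 : |∫ x in K, (f x - f φ₀) * (dens n x / Z n)|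
      ≤ ∫ x in K, |f x - f φ₀| * (dens n x / Z n) := by
    calc |∫ x in K, (f x - f φ₀) * (dens n x / Z n)|
        ≤ ∫ x in K, |(f x - f φ₀) * (dens n x / Z n)| := by
          simpa only [Real.norm_eq_abs] using
            norm_integral_le_integral_norm (fun x => (f x - f φ₀) * (dens n x / Z n))
              (μ := volume.restrict K)
      _ = ∫ x in K, |f x - f φ₀| * (dens n x / Z n) := by
          apply setIntegral_congr_fun hKmeas
          intro x hx
          simp only [abs_mul, abs_of_nonneg (hρnonneg x hx)]
  refine lt_of_le_of_lt hstep1 ?_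
  have hsplit : ∫ x in K, |f x - f φ₀| * (dens n x / Z n)
      = (∫ x in K ∩ B, |f x - f φ₀| * (dens n x / Z n))
        + ∫ x in S, |f x - f φ₀| * (dens n x / Z n) :=
    (integral_inter_add_diff hBmeas habsint).symm
  have hKB : K ∩ B ⊆ K := Set.inter_subset_left
  have hpiece1 : ∫ x in K ∩ B, |f x - f φ₀| * (dens n x / Z n) ≤ ε / 2 := by
    calc ∫ x in K ∩ B, |f x - f φ₀| * (dens n x / Z n)
        ≤ ∫ x in K ∩ B, (ε / 2) * (dens n x / Z n) := by
          apply setIntegral_mono_on (habsint.mono_set hKB)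
            ((hρint.mono_set hKB).const_mul _) (hKmeas.inter hBmeas)
          intro x hx
          refine mul_le_mul_of_nonneg_right ?_ (hρnonneg x (hKB hx))
          refine le_of_lt (hfδ x ?_)
          have hx2 := hx.2
          have habs : |x - φ₀| < δ := abs_lt.mpr ⟨by linarith [hx2.1], by linarith [hx2.2]⟩
          exact lt_of_lt_of_le habs hδle
      _ = (ε / 2) * ∫ x in K ∩ B, dens n x / Z n := integral_const_mul _ _
      _ ≤ (ε / 2) * 1 := by
          refine mul_le_mul_of_nonneg_left ?_ (by linarith)
          rw [← hρtotal]
          apply setIntegral_mono_set hρint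
          · exact (ae_restrict_iff' hKmeas).mpr (ae_of_all _ fun x hx => hρnonneg x hx)
          · exact HasSubset.Subset.eventuallyLE hKB
      _ = ε / 2 := mul_one _
  have hpiece2 : ∫ x in S, |f x - f φ₀| * (dens n x / Z n) < ε / 2 := by
    have h2M : ∀ x ∈ S, |f x - f φ₀| * (dens n x / Z n) ≤ (2 * M) * (dens n x / Z n) := by
      intro x hx
      refine mul_le_mul_of_nonneg_right ?_ (hρnonneg x (hSK hx))
      calc |f x - f φ₀| ≤ |f x| + |f φ₀| := abs_sub _ _
        _ ≤ M + M := add_le_add (hM x) (hM φ₀)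
        _ = 2 * M := by ring
    have hSnonneg : 0 ≤ (∫ x in S, dens n x) / Z n :=
      div_nonneg (setIntegral_nonneg hSmeas fun x hx => (hdpos n x (hSK hx)).le) hZpos.le
    have hM1 : (0:ℝ) < M + 1 := by linarith
    calc ∫ x in S, |f x - f φ₀| * (dens n x / Z n)
        ≤ ∫ x in S, (2 * M) * (dens n x / Z n) :=
          setIntegral_mono_on (habsint.mono_set hSK)
            ((hρint.mono_set hSK).const_mul _) hSmeas h2M
      _ = (2 * M) * ((∫ x in S, dens n x) / Z n) := by
          rw [integral_const_mul, integral_div]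
      _ ≤ (2 * M) * (C * Real.exp (-((n:ℝ)/2) * η)) :=
          mul_le_mul_of_nonneg_left hratio (by linarith)
      _ ≤ (2 * M) * (ε / (4 * (M + 1))) :=
          mul_le_mul_of_nonneg_left hn2.le (by linarith)
      _ < ε / 2 := small_calc hM0 hε
  rw [hsplit]
  linarith [hpiece1, hpiece2]
end
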